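/- Let F be a field and let R be the ring of ternions over F. Every left ideal of R is equal to one of the following: the zero ideal, R itself, the two-sided ideal I₁ of ternions with zero first column, the two-sided ideal I₂ of ternions with zero second row, or I₂(a:b) = { (xa xb; 0 0) : x ∈ F } for some pair (a,b) ∈ F² with (a,b) ≠ (0,0). -/

import Mathlib

set_option synthInstance.maxHeartbeats 1000000
set_option maxHeartbeats 1000000

/-- The ring of ternions over a field `F`: the subring of `2×2` matrices over `F`
consisting of all upper triangular matrices. -/
def ternions (F : Type) [Field F] : Subring (Matrix (Fin 2) (Fin 2) F) where
  carrier := {A | A 1 0 = 0}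
  zero_mem' := by simp
  one_mem' := by simp [Matrix.one_apply]
  add_mem' := by
    intro a b ha hb
    simp only [Set.mem_setOf_eq, Matrix.add_apply] at *
    simp [ha, hb]
  neg_mem' := by
    intro a ha
    simp only [Set.mem_setOf_eq, Matrix.neg_apply] at *
    simp [ha]
  mul_mem' := by
    intro a b ha hb
    simp only [Set.mem_setOf_eq, Matrix.mul_apply, Fin.sum_univ_two] at *
    simp [ha, hb]

section Aux

variable {F : Type} [Field F]

/-- Build a ternion from its three entries. -/
def Tn (x y z : F) : ternions F := ⟨!![x, y; 0, z], by show !![x,y;(0:F),z] 1 0 = 0; simp⟩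

@[simp] lemma Tn00 (x y z : F) : (Tn x y z).val 0 0 = x := by simp [Tn]
@[simp] lemma Tn01 (x y z : F) : (Tn x y z).val 0 1 = y := by simp [Tn]
@[simp] lemma Tn11 (x y z : F) : (Tn x y z).val 1 1 = z := by simp [Tn]

lemma Tn_canon (A : ternions F) : A = Tn (A.val 0 0) (A.val 0 1) (A.val 1 1) := by
  apply Subtype.ext
  ext i j
  fin_cases i <;> fin_cases j <;> simp [Tn] <;> exact A.2

lemma Tn_mul (p q r x y z : F) :
    Tn p q r * Tn x y z = Tn (p*x) (p*y + q*z) (r*z) := by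
  apply Subtype.ext
  show (!![p,q;0,r] : Matrix (Fin 2) (Fin 2) F) * !![x,y;0,z] = _
  rw [Matrix.mul_fin_two]
  simp [Tn]

lemma Tn_add (p q r x y z : F) :
    Tn p q r + Tn x y z = Tn (p+x) (q+y) (r+z) := by
  apply Subtype.ext
  show (!![p,q;0,r] : Matrix (Fin 2) (Fin 2) F) + !![x,y;0,z] = _
  ext i j
  fin_cases i <;> fin_cases j <;> simp [Tn]

lemma Tn_sub (p q r x y z : F) :
    Tn p q r - Tn x y z = Tn (p-x) (q-y) (r-z) := by
  apply Subtype.ext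
  show (!![p,q;0,r] : Matrix (Fin 2) (Fin 2) F) - !![x,y;0,z] = _
  ext i j
  fin_cases i <;> fin_cases j <;> simp [Tn]

lemma Tn_zero : (Tn 0 0 0 : ternions F) = 0 := by
  apply Subtype.ext
  show (!![0,0;0,0] : Matrix (Fin 2) (Fin 2) F) = 0
  ext i j
  fin_cases i <;> fin_cases j <;> simp

lemma Tn_one : (Tn 1 0 1 : ternions F) = 1 := by
  apply Subtype.ext
  show (!![1,0;0,1] : Matrix (Fin 2) (Fin 2) F) = 1
  ext i j
  fin_cases i <;> fin_cases j <;> simp [Matrix.one_apply]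

end Aux

/-- Every left ideal of the ring of ternions is `0`, the whole ring, `I₁` (zero first
column), `I₂` (zero second row), or `I₂(a:b) = { (xa xb; 0 0) : x ∈ F }` for some
`(a,b) ≠ (0,0)`. -/
theorem ternion_leftIdeals (F : Type) [Field F] (J : Ideal (ternions F)) :
    (J : Set (ternions F)) = {0} ∨
    (J : Set (ternions F)) = Set.univ ∨
    (J : Set (ternions F)) = {A : ternions F | A.val 0 0 = 0} ∨
    (J : Set (ternions F)) = {A : ternions F | A.val 1 1 = 0} ∨
    (∃ a b : F, (a, b) ≠ (0, 0) ∧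
      (J : Set (ternions F)) =
        {A : ternions F | A.val 1 1 = 0 ∧ ∃ x : F, A.val 0 0 = x * a ∧ A.val 0 1 = x * b}) := by
  classical
  by_cases h1 : ∃ A ∈ J, A.val 1 1 ≠ 0
  · obtain ⟨A, hA, hd⟩ := h1
    have hA' : Tn (A.val 0 0) (A.val 0 1) (A.val 1 1) ∈ J := by rw [← Tn_canon]; exact hA
    have he22 : Tn (0:F) 0 1 ∈ J := by
      have h := Ideal.mul_mem_left J (Tn 0 0 (A.val 1 1)⁻¹) hA'
      rw [Tn_mul] at h
      simpa [inv_mul_cancel₀ hd] using h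
    have he12 : Tn (0:F) 1 0 ∈ J := by
      have h := Ideal.mul_mem_left J (Tn 0 (A.val 1 1)⁻¹ 0) hA'
      rw [Tn_mul] at h
      simpa [inv_mul_cancel₀ hd] using h
    have hI1 : ∀ y z : F, Tn 0 y z ∈ J := by
      intro y z
      have m1 := Ideal.mul_mem_left J (Tn y 0 0) he12
      have m2 := Ideal.mul_mem_left J (Tn 0 0 z) he22
      rw [Tn_mul] at m1 m2
      have h := J.add_mem m1 m2
      rw [Tn_add] at h
      simpa using h
    by_cases h2 : ∃ B ∈ J, B.val 0 0 ≠ 0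
    · obtain ⟨B, hB, ha⟩ := h2
      have hB' : Tn (B.val 0 0) (B.val 0 1) (B.val 1 1) ∈ J := by rw [← Tn_canon]; exact hB
      have h11 : Tn (1:F) 0 0 ∈ J := by
        have h := Ideal.mul_mem_left J (Tn (B.val 0 0)⁻¹ 0 0) hB'
        rw [Tn_mul] at h
        simp only [inv_mul_cancel₀ ha, zero_mul, mul_zero, add_zero] at h
        have hs := J.sub_mem h (hI1 ((B.val 0 0)⁻¹ * B.val 0 1) 0)
        rw [Tn_sub] at hs
        simpa using hs
      have hone : (1 : ternions F) ∈ J := by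
        have h := J.add_mem h11 (hI1 0 1)
        rw [Tn_add] at h
        simpa [Tn_one] using h
      right; left
      ext C
      simp only [SetLike.mem_coe, Set.mem_univ, iff_true]
      have h := Ideal.mul_mem_left J C hone
      simpa using h
    · right; right; left
      ext B
      simp only [SetLike.mem_coe, Set.mem_setOf_eq]
      constructor
      · intro hB
        by_contra hne
        exact h2 ⟨B, hB, hne⟩
      · intro hB
        have h := hI1 (B.val 0 1) (B.val 1 1)
        have hBe : B = Tn 0 (B.val 0 1) (B.val 1 1) := by
          conv_lhs => rw [Tn_canon B]
          rw [hB]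
        rw [hBe]; exact h
  · push_neg at h1
    by_cases h0 : (J : Set (ternions F)) = {0}
    · left; exact h0
    · have hex : ∃ A ∈ J, A ≠ 0 := by
        by_contra h
        push_neg at h
        apply h0
        ext x
        simp only [SetLike.mem_coe, Set.mem_singleton_iff]
        exact ⟨fun hx => h x hx, fun hx => hx ▸ J.zero_mem⟩
      obtain ⟨A, hA, hAne⟩ := hex
      have hd : A.val 1 1 = 0 := h1 A hA
      have hA' : A = Tn (A.val 0 0) (A.val 0 1) 0 := by
        conv_lhs => rw [Tn_canon A]
        rw [hd]
      set a := A.val 0 0 with ha_def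
      set b := A.val 0 1 with hb_def
      have hab : (a, b) ≠ (0, 0) := by
        intro h
        apply hAne
        rw [Prod.mk.injEq] at h
        rw [hA', h.1, h.2, Tn_zero]
      have hline : ∀ x : F, Tn (x*a) (x*b) 0 ∈ J := by
        intro x
        have h := Ideal.mul_mem_left J (Tn x 0 0) (hA' ▸ hA)
        rw [Tn_mul] at h
        simpa using h
      by_cases h3 : ∃ B ∈ J, ¬∃ x : F, B.val 0 0 = x*a ∧ B.val 0 1 = x*b
      · obtain ⟨B, hB, hBnx⟩ := h3
        have hBd : B.val 1 1 = 0 := h1 B hB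
        have hB' : B = Tn (B.val 0 0) (B.val 0 1) 0 := by
          conv_lhs => rw [Tn_canon B]
          rw [hBd]
        set c := B.val 0 0 with hc_def
        set d := B.val 0 1 with hd_def
        have hΔ : a*d - b*c ≠ 0 := by
          intro h
          apply hBnx
          by_cases haz : a = 0
          · have hbz : b ≠ 0 := by
              intro hb
              exact hab (by rw [haz, hb])
            have hcz : c = 0 := by
              have : b * c = 0 := by
                have := sub_eq_zero.mp h
                rw [haz] at this
                simpa using this.symm
              rcases mul_eq_zero.mp this with h' | h'
              · exact absurd h' hbz
              · exact h'
            exact ⟨d / b, by rw [hcz, haz, mul_zero], by field_simp⟩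
          · refine ⟨c / a, by field_simp, ?_⟩
            have := sub_eq_zero.mp h
            rw [div_mul_eq_mul_div, eq_div_iff haz]
            linear_combination this
        right; right; right; left
        ext C
        simp only [SetLike.mem_coe, Set.mem_setOf_eq]
        constructor
        · intro hC; exact h1 C hC
        · intro hC
          have hC' : C = Tn (C.val 0 0) (C.val 0 1) 0 := by
            conv_lhs => rw [Tn_canon C]
            rw [hC]
          set u := C.val 0 0 with hu_def
          set v := C.val 0 1 with hv_def
          have m1 := Ideal.mul_mem_left J (Tn ((u*d - v*c)/(a*d - b*c)) 0 0) (hA' ▸ hA)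
          have m2 := Ideal.mul_mem_left J (Tn ((a*v - b*u)/(a*d - b*c)) 0 0) (hB' ▸ hB)
          rw [Tn_mul] at m1 m2
          have h := J.add_mem m1 m2
          rw [Tn_add] at h
          have e1 : (u*d - v*c)/(a*d - b*c) * a + (a*v - b*u)/(a*d - b*c) * c = u := by
            rw [div_mul_eq_mul_div, div_mul_eq_mul_div, ← add_div, div_eq_iff hΔ]
            ring
          have e2 : (u*d - v*c)/(a*d - b*c) * b + (a*v - b*u)/(a*d - b*c) * d = v := by
            rw [div_mul_eq_mul_div, div_mul_eq_mul_div, ← add_div, div_eq_iff hΔ]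
            ring
          simp only [mul_zero, zero_mul, add_zero, zero_add] at h
          rw [e1, e2] at h
          rw [hC']; exact h
      · push_neg at h3
        right; right; right; right
        refine ⟨a, b, hab, ?_⟩
        ext B
        simp only [SetLike.mem_coe, Set.mem_setOf_eq]
        constructor
        · intro hB
          exact ⟨h1 B hB, h3 B hB⟩
        · rintro ⟨hB1, x, hx0, hx1⟩
          have h := hline x
          have hBe : B = Tn (x*a) (x*b) 0 := by
            conv_lhs => rw [Tn_canon B]
            rw [hx0, hx1, hB1]
          rw [hBe]; exact h
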